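/- Let X be an uncountable Polish space and let C ⊆ X be a nonempty analytic set. Then there exists a sequence y : [ω]² → X such that C = Λ_y(r) = Λ_y(R). Consequently, the family of nonempty sets of the form Λ_y(r) for y : [ω]² → X, as well as the family of nonempty sets of the form Λ_y(R), each coincides with the family of nonempty analytic subsets of X. -/

import Mathlib

open Set Filter Topology

/-- Elements of `[ω]²` (two-element subsets of `ω`), encoded as ordered pairs
`(i, j)` with `i < j`. -/
abbrev Pair : Type := {p : ℕ × ℕ // p.1 < p.2}

/-- `[D]²`: the two-element subsets of `D`. -/
def pairsOf (D : Set ℕ) : Set Pair := {p | p.1.1 ∈ D ∧ p.1.2 ∈ D}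

variable {X : Type*}

/-- `η` is an `r`-limit point of the sequence `x : [ω]² → X`. -/
def IsRLimitPoint [TopologicalSpace X] (x : Pair → X) (η : X) : Prop :=
  ∃ D : Set ℕ, D.Infinite ∧ ∀ U ∈ 𝓝 η, ∃ K : Set ℕ, K.Finite ∧
    ∀ p ∈ pairsOf (D \ K), x p ∈ U

/-- `η` is an `r`-cluster point of the sequence `x : [ω]² → X`. -/
def IsRClusterPoint [TopologicalSpace X] (x : Pair → X) (η : X) : Prop :=
  ∀ U ∈ 𝓝 η, ∃ D : Set ℕ, D.Infinite ∧ pairsOf D ⊆ {p | x p ∈ U}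

/-- The Ramsey ideal `R` on `[ω]²`. -/
def ramseyIdeal : Set (Set Pair) :=
  {S | ∀ D : Set ℕ, D.Infinite → ¬ pairsOf D ⊆ S}

/-- `η` is an `I`-limit point of `y`: some subsequence indexed by a set `S ∉ I`
converges (in the ordinary sense) to `η`. -/
def IsIdealLimitPoint [TopologicalSpace X] (I : Set (Set Pair)) (y : Pair → X) (η : X) :
    Prop :=
  ∃ S : Set Pair, S ∉ I ∧ ∀ U ∈ 𝓝 η, {s ∈ S | y s ∉ U}.Finite

open MeasureTheory in
section

/-! ### Auxiliary lemmas -/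

theorem notMem_ramseyIdeal_iff {S : Set Pair} :
    S ∉ ramseyIdeal ↔ ∃ D : Set ℕ, D.Infinite ∧ pairsOf D ⊆ S := by
  simp only [ramseyIdeal, Set.mem_setOf_eq, not_forall, not_not, exists_prop]

theorem idealLimit_to_rLimit [TopologicalSpace X] (y : Pair → X) (η : X)
    (h : IsIdealLimitPoint ramseyIdeal y η) : IsRLimitPoint y η := by
  obtain ⟨S, hS, hconv⟩ := h
  obtain ⟨D, hDinf, hDS⟩ := notMem_ramseyIdeal_iff.1 hS
  refine ⟨D, hDinf, fun U hU => ?_⟩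
  have hE : {s ∈ S | y s ∉ U}.Finite := hconv U hU
  refine ⟨(fun s : Pair => s.1.1) '' {s ∈ S | y s ∉ U} ∪
      (fun s : Pair => s.1.2) '' {s ∈ S | y s ∉ U},
    (hE.image _).union (hE.image _), fun p hp => ?_⟩
  obtain ⟨⟨h1D, h1K⟩, h2D, h2K⟩ := hp
  by_contra hyp
  exact h1K (Or.inl ⟨p, ⟨hDS ⟨h1D, h2D⟩, hyp⟩, rfl⟩)

theorem idealLimit_iff [TopologicalSpace X] (y : Pair → X) (η : X) :
    IsIdealLimitPoint ramseyIdeal y η ↔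
      ∃ D : Set ℕ, D.Infinite ∧ ∀ U ∈ 𝓝 η, {p ∈ pairsOf D | y p ∉ U}.Finite := by
  constructor
  · rintro ⟨S, hS, hconv⟩
    obtain ⟨D, hDinf, hDS⟩ := notMem_ramseyIdeal_iff.1 hS
    exact ⟨D, hDinf, fun U hU => (hconv U hU).subset fun p hp => ⟨hDS hp.1, hp.2⟩⟩
  · rintro ⟨D, hDinf, hfin⟩
    exact ⟨pairsOf D, notMem_ramseyIdeal_iff.2 ⟨D, hDinf, subset_rfl⟩, hfin⟩

/-! ### The construction -/

/-- pad a list with zeros -/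
def pad (l : List ℕ) : ℕ → ℕ := fun n => l.getD n 0

noncomputable def eL : ℕ ≃ List ℕ := (Denumerable.eqv (List ℕ)).symm

open Classical in
noncomputable def yseq (f : (ℕ → ℕ) → X) : Pair → X := fun p =>
  if eL p.1.1 <+: eL p.1.2 ∧ (eL p.1.1).length < (eL p.1.2).length then f (pad (eL p.1.2))
  else f (pad [])

theorem prefix_getD {l₁ l₂ : List ℕ} (h : l₁ <+: l₂) {n : ℕ} (hn : n < l₁.length) :
    l₁.getD n 0 = l₂.getD n 0 := by
  rw [List.getD_eq_getElem _ _ hn, List.getD_eq_getElem _ _ (hn.trans_le h.length_le)]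
  exact h.getElem hn

theorem pad_tendsto (α : ℕ → ℕ) :
    Tendsto (fun k => pad ((List.range k).map α)) atTop (𝓝 α) := by
  rw [tendsto_pi_nhds]
  intro n
  refine (tendsto_const_nhds (α := ℕ) (x := α n)).congr'  ?_
  filter_upwards [eventually_ge_atTop (n + 1)] with k hk
  have hn : n < ((List.range k).map α).length := by simpa using hk
  rw [pad, List.getD_eq_getElem _ _ hn]
  simp [List.getElem_range]

section Constr
variable [TopologicalSpace X] {f : (ℕ → ℕ) → X} (hf : Continuous f)

theorem yseq_mem (hf : Continuous f) (α : ℕ → ℕ) :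
    IsRLimitPoint (yseq f) (f α) ∧ IsIdealLimitPoint ramseyIdeal (yseq f) (f α) := by
  classical
  set l : ℕ → List ℕ := fun k => (List.range k).map α with hl
  have hlinj : Function.Injective l := by
    intro a b h
    have h2 : ((List.range a).map α).length = ((List.range b).map α).length :=
      congrArg List.length h
    simpa using h2
  set c : ℕ → ℕ := fun k => eL.symm (l k) with hc
  have hcinj : Function.Injective c := eL.symm.injective.comp hlinj
  have H : ∀ a : ℕ, ∃ k, a < k ∧ c a < c k := by
    intro a
    have hfin : {k | c k ≤ c a}.Finite :=
      (Set.finite_Iic (c a)).preimage hcinj.injOn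
    obtain ⟨B, hB⟩ := hfin.bddAbove
    refine ⟨max a B + 1, by omega, ?_⟩
    by_contra h
    push_neg at h
    have : max a B + 1 ≤ B := hB h
    omega
  set ψ : ℕ → ℕ := fun n => Nat.rec 0 (fun _ prev => Nat.find (H prev)) n with hψdef
  have hψs : ∀ n, ψ n < ψ (n + 1) ∧ c (ψ n) < c (ψ (n + 1)) := fun n => Nat.find_spec (H (ψ n))
  have hψmono : StrictMono ψ := strictMono_nat_of_lt_succ fun n => (hψs n).1
  set d : ℕ → ℕ := fun n => c (ψ n) with hd
  have hdmono : StrictMono d := strictMono_nat_of_lt_succ fun n => (hψs n).2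
  set D : Set ℕ := Set.range d with hD
  have hDinf : D.Infinite := Set.infinite_range_of_injective hdmono.injective
  have heL : ∀ k, eL (c k) = l k := fun k => eL.apply_symm_apply (l k)
  have hchain : ∀ {i j : ℕ}, i < j → l (ψ i) <+: l (ψ j) ∧ (l (ψ i)).length < (l (ψ j)).length := by
    intro i j hij
    have h1 : ψ i ≤ ψ j := (hψmono hij).le
    constructor
    · have he : l (ψ i) = (l (ψ j)).take (ψ i) := by
        rw [hl]
        dsimp only
        rw [← List.map_take, List.take_range, Nat.min_eq_left h1]
      rw [he]
      exact List.take_prefix _ _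
    · simpa [hl] using hψmono hij
  have hval : ∀ (i j : ℕ) (hij : i < j),
      yseq f ⟨(d i, d j), hdmono hij⟩ = f (pad (l (ψ j))) := by
    intro i j hij
    rw [yseq]
    simp only [hd, heL]
    rw [if_pos (hchain hij)]
  have hT : Tendsto (fun j => f (pad (l (ψ j)))) atTop (𝓝 (f α)) :=
    ((hf.tendsto α).comp (pad_tendsto α)).comp hψmono.tendsto_atTop
  constructor
  · refine ⟨D, hDinf, fun U hU => ?_⟩
    obtain ⟨M, hM⟩ := eventually_atTop.1 (hT.eventually_mem hU)
    refine ⟨d '' Set.Iio M, (Set.finite_Iio M).image d, ?_⟩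
    rintro ⟨⟨a, b⟩, hab⟩ ⟨⟨⟨i, rfl⟩, hK1⟩, ⟨j, rfl⟩, hK2⟩
    have hij : i < j := hdmono.lt_iff_lt.1 hab
    have hjM : M ≤ j := by
      by_contra h
      push_neg at h
      exact hK2 ⟨j, h, rfl⟩
    have := hval i j hij
    simp only [hd] at this ⊢
    rw [this]
    exact hM j hjM
  · refine ⟨pairsOf D, ?_, fun U hU => ?_⟩
    · intro hmem
      exact hmem D hDinf subset_rfl
    · obtain ⟨M, hM⟩ := eventually_atTop.1 (hT.eventually_mem hU)
      refine Set.Finite.subset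
        (((Set.finite_Iio (d M)).prod (Set.finite_Iio (d M))).preimage
          Subtype.val_injective.injOn) ?_
      rintro ⟨⟨a, b⟩, hab⟩ ⟨⟨⟨i, rfl⟩, ⟨j, rfl⟩⟩, hyU⟩
      have hij : i < j := hdmono.lt_iff_lt.1 hab
      have hjM : j < M := by
        by_contra h
        push_neg at h
        exact hyU (by rw [hval i j hij]; exact hM j h)
      have h2 : d j < d M := hdmono hjM
      exact ⟨lt_trans hab h2, h2⟩
theorem yseq_upper [T2Space X] (hf : Continuous f) {η : X}
    (h : IsRLimitPoint (yseq f) η) : η ∈ Set.range f := by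
  classical
  obtain ⟨D, hDinf, hU⟩ := h
  by_cases hgood : ∃ K₀ : Set ℕ, K₀.Finite ∧ ∀ p ∈ pairsOf (D \ K₀),
      eL p.1.1 <+: eL p.1.2 ∧ (eL p.1.1).length < (eL p.1.2).length
  · obtain ⟨K₀, hK₀fin, hgoodp⟩ := hgood
    have hD'inf : (D \ K₀).Infinite := hDinf.diff hK₀fin
    have hsetOf : {n | n ∈ D \ K₀}.Infinite := hD'inf
    set nth : ℕ → ℕ := Nat.nth (· ∈ D \ K₀) with hnth
    have hmem : ∀ n, nth n ∈ D \ K₀ := fun n => Nat.nth_mem_of_infinite hsetOf n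
    have hmono : StrictMono nth := Nat.nth_strictMono hsetOf
    have hchain : ∀ {i j : ℕ}, i < j →
        eL (nth i) <+: eL (nth j) ∧ (eL (nth i)).length < (eL (nth j)).length := by
      intro i j hij
      exact hgoodp ⟨(nth i, nth j), hmono hij⟩ ⟨hmem i, hmem j⟩
    have hL : StrictMono fun n => (eL (nth n)).length := fun i j hij => (hchain hij).2
    set α : ℕ → ℕ := fun n => (eL (nth (n + 1))).getD n 0 with hα
    set g : ℕ → X := fun j => f (pad (eL (nth j))) with hg
    have hT1 : Tendsto g atTop (𝓝 (f α)) := by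
      refine (hf.tendsto α).comp ?_
      rw [tendsto_pi_nhds]
      intro n
      refine (tendsto_const_nhds (α := ℕ) (x := α n)).congr' ?_
      filter_upwards [eventually_ge_atTop (n + 2)] with j hj
      have hn : n < (eL (nth (n + 1))).length := lt_of_lt_of_le (Nat.lt_succ_self n) hL.le_apply
      have hpre : eL (nth (n + 1)) <+: eL (nth j) := (hchain (by omega)).1
      show α n = pad (eL (nth j)) n
      rw [hα, pad]
      exact prefix_getD hpre hn
    have hT2 : Tendsto g atTop (𝓝 η) := by
      rw [tendsto_def]
      intro U hUη
      obtain ⟨K, hKfin, hKU⟩ := hU U hUη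
      have hJfin : (nth ⁻¹' K).Finite := hKfin.preimage hmono.injective.injOn
      obtain ⟨B, hB⟩ := hJfin.bddAbove
      rw [mem_atTop_sets]
      refine ⟨B + 2, fun j hj => ?_⟩
      have hi₀ : nth (B + 1) ∉ K := fun hmemK => by
        have : B + 1 ≤ B := hB hmemK
        omega
      have hjK : nth j ∉ K := fun hmemK => by
        have : j ≤ B := hB hmemK
        omega
      have hij : B + 1 < j := by omega
      have hpmem : (⟨(nth (B + 1), nth j), hmono hij⟩ : Pair) ∈ pairsOf (D \ K) := by
        exact ⟨⟨(hmem (B + 1)).1, hi₀⟩, (hmem j).1, hjK⟩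
      have := hKU _ hpmem
      have hvp : yseq f ⟨(nth (B + 1), nth j), hmono hij⟩ = g j := by
        rw [yseq, if_pos (hchain hij)]
      rwa [hvp] at this
    exact ⟨α, (tendsto_nhds_unique hT2 hT1).symm⟩
  · push_neg at hgood
    refine ⟨pad [], ?_⟩
    by_contra hne
    have hope : ({f (pad [])}ᶜ : Set X) ∈ 𝓝 η :=
      (isOpen_compl_singleton).mem_nhds (by simpa [eq_comm] using hne)
    obtain ⟨K, hKfin, hKU⟩ := hU _ hope
    obtain ⟨p, hp, hbad⟩ := hgood K hKfin
    have : yseq f p = f (pad []) := by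
      rw [yseq, if_neg]
      rintro ⟨h1, h2⟩
      exact absurd h2 (not_lt.2 (hbad h1))
    exact (hKU p hp) (by rw [this]; exact rfl)

end Constr


/-! ### Analyticity -/

theorem rLimit_analytic [TopologicalSpace X] [PolishSpace X] (y : Pair → X) :
    AnalyticSet {η | IsRLimitPoint y η} := by
  classical
  letI := TopologicalSpace.upgradeIsCompletelyMetrizable X
  letI : MeasurableSpace X := borel X
  haveI : BorelSpace X := ⟨rfl⟩
  set A : Set (X × (ℕ → ℕ)) :=
    {x | (∀ m : ℕ, ∃ n, m ≤ n ∧ x.2 n = 1) ∧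
      ∀ m : ℕ, ∃ K : Finset ℕ, ∀ p : Pair, x.2 p.1.1 = 1 → x.2 p.1.2 = 1 →
        p.1.1 ∉ K → p.1.2 ∉ K → dist (y p) x.1 < 1 / (m + 1)} with hA
  have hS : ∀ n : ℕ, MeasurableSet {x : X × (ℕ → ℕ) | x.2 n = 1} := fun n =>
    ((measurable_pi_apply n).comp measurable_snd) (measurableSet_singleton 1)
  have hdist : ∀ (p : Pair) (r : ℝ), MeasurableSet {x : X × (ℕ → ℕ) | dist (y p) x.1 < r} :=
    fun p r =>
      (isOpen_lt ((continuous_const.dist continuous_fst : Continuous fun x : X × (ℕ → ℕ) =>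
        dist (y p) x.1)) continuous_const).measurableSet
  have hmeas : MeasurableSet A := by
    have h1 : MeasurableSet {x : X × (ℕ → ℕ) | ∀ m : ℕ, ∃ n, m ≤ n ∧ x.2 n = 1} := by
      have he : {x : X × (ℕ → ℕ) | ∀ m : ℕ, ∃ n, m ≤ n ∧ x.2 n = 1} =
          ⋂ m : ℕ, ⋃ n : ℕ, {x : X × (ℕ → ℕ) | m ≤ n ∧ x.2 n = 1} := by
        ext x; simp
      rw [he]
      refine MeasurableSet.iInter fun m => MeasurableSet.iUnion fun n => ?_
      by_cases h : m ≤ n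
      · simp only [h, true_and]
        exact hS n
      · simp only [h, false_and, Set.setOf_false]
        exact MeasurableSet.empty
    have h2 : MeasurableSet {x : X × (ℕ → ℕ) |
        ∀ m : ℕ, ∃ K : Finset ℕ, ∀ p : Pair, x.2 p.1.1 = 1 → x.2 p.1.2 = 1 →
          p.1.1 ∉ K → p.1.2 ∉ K → dist (y p) x.1 < 1 / (m + 1)} := by
      have he : {x : X × (ℕ → ℕ) |
          ∀ m : ℕ, ∃ K : Finset ℕ, ∀ p : Pair, x.2 p.1.1 = 1 → x.2 p.1.2 = 1 →
            p.1.1 ∉ K → p.1.2 ∉ K → dist (y p) x.1 < 1 / (m + 1)} =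
          ⋂ m : ℕ, ⋃ K : Finset ℕ, ⋂ p : Pair,
            {x : X × (ℕ → ℕ) | x.2 p.1.1 = 1 → x.2 p.1.2 = 1 →
              p.1.1 ∉ K → p.1.2 ∉ K → dist (y p) x.1 < 1 / (m + 1)} := by
        ext x; simp
      rw [he]
      refine MeasurableSet.iInter fun m => MeasurableSet.iUnion fun K =>
        MeasurableSet.iInter fun p => ?_
      by_cases h1K : p.1.1 ∈ K
      · have : {x : X × (ℕ → ℕ) | x.2 p.1.1 = 1 → x.2 p.1.2 = 1 →
            p.1.1 ∉ K → p.1.2 ∉ K → dist (y p) x.1 < 1 / (m + 1)} = Set.univ := by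
          ext x; simp [h1K]
        rw [this]; exact MeasurableSet.univ
      by_cases h2K : p.1.2 ∈ K
      · have : {x : X × (ℕ → ℕ) | x.2 p.1.1 = 1 → x.2 p.1.2 = 1 →
            p.1.1 ∉ K → p.1.2 ∉ K → dist (y p) x.1 < 1 / (m + 1)} = Set.univ := by
          ext x; simp [h2K]
        rw [this]; exact MeasurableSet.univ
      have : {x : X × (ℕ → ℕ) | x.2 p.1.1 = 1 → x.2 p.1.2 = 1 →
          p.1.1 ∉ K → p.1.2 ∉ K → dist (y p) x.1 < 1 / (m + 1)} =
          {x : X × (ℕ → ℕ) | x.2 p.1.1 = 1}ᶜ ∪ {x : X × (ℕ → ℕ) | x.2 p.1.2 = 1}ᶜ ∪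
            {x : X × (ℕ → ℕ) | dist (y p) x.1 < 1 / (m + 1)} := by
        ext x
        simp only [Set.mem_setOf_eq, Set.mem_union, Set.mem_compl_iff, h1K, h2K,
          not_false_eq_true, forall_true_left]
        tauto
      rw [this]
      exact ((hS _).compl.union (hS _).compl).union (hdist p _)
    exact (hA ▸ h1.inter h2 : MeasurableSet A)
  have him : {η | IsRLimitPoint y η} = Prod.fst '' A := by
    ext η
    constructor
    · rintro ⟨D, hDinf, hP⟩
      refine ⟨(η, fun n => if n ∈ D then 1 else 0), ⟨fun m => ?_, fun m => ?_⟩, rfl⟩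
      · obtain ⟨b, hbD, hmb⟩ := hDinf.exists_gt m
        exact ⟨b, hmb.le, if_pos hbD⟩
      · obtain ⟨K, hKfin, hKU⟩ :=
          hP (Metric.ball η (1 / (m + 1))) (Metric.ball_mem_nhds _ (by positivity))
        refine ⟨hKfin.toFinset, fun p h1 h2 hK1 hK2 => ?_⟩
        have hp1 : p.1.1 ∈ D := by by_contra h; simp [h] at h1
        have hp2 : p.1.2 ∈ D := by by_contra h; simp [h] at h2
        exact Metric.mem_ball.1 (hKU p ⟨⟨hp1, fun hh => hK1 (hKfin.mem_toFinset.2 hh)⟩,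
          hp2, fun hh => hK2 (hKfin.mem_toFinset.2 hh)⟩)
    · rintro ⟨⟨η', χ⟩, ⟨hinf, hP⟩, rfl⟩
      refine ⟨{n | χ n = 1}, ?_, fun U hU => ?_⟩
      · apply Set.infinite_of_forall_exists_gt
        intro a
        obtain ⟨n, hn, h1⟩ := hinf (a + 1)
        exact ⟨n, h1, by omega⟩
      · obtain ⟨ε, hε, hball⟩ := Metric.mem_nhds_iff.1 hU
        obtain ⟨m, hm⟩ := exists_nat_one_div_lt hε
        obtain ⟨K, hK⟩ := hP m
        refine ⟨↑K, K.finite_toSet, fun p hp => ?_⟩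
        have hd := hK p hp.1.1 hp.2.1 (fun h => hp.1.2 (Finset.mem_coe.2 h))
          (fun h => hp.2.2 (Finset.mem_coe.2 h))
        exact hball (Metric.mem_ball.2 (lt_trans hd (by exact_mod_cast hm)))
  rw [him]
  exact hmeas.analyticSet.image_of_continuous continuous_fst


theorem ramseyLimit_aux_analytic [TopologicalSpace X] [PolishSpace X] (y : Pair → X) :
    AnalyticSet {η : X | ∃ D : Set ℕ, D.Infinite ∧
      ∀ U ∈ 𝓝 η, {p ∈ pairsOf D | y p ∉ U}.Finite} := by
  classical
  letI := TopologicalSpace.upgradeIsCompletelyMetrizable X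
  letI : MeasurableSpace X := borel X
  haveI : BorelSpace X := ⟨rfl⟩
  set A : Set (X × (ℕ → ℕ)) :=
    {x | (∀ m : ℕ, ∃ n, m ≤ n ∧ x.2 n = 1) ∧
      ∀ m : ℕ, ∃ F : Finset Pair, ∀ p : Pair, x.2 p.1.1 = 1 → x.2 p.1.2 = 1 →
        p ∉ F → dist (y p) x.1 < 1 / (m + 1)} with hA
  have hS : ∀ n : ℕ, MeasurableSet {x : X × (ℕ → ℕ) | x.2 n = 1} := fun n =>
    ((measurable_pi_apply n).comp measurable_snd) (measurableSet_singleton 1)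
  have hdist : ∀ (p : Pair) (r : ℝ), MeasurableSet {x : X × (ℕ → ℕ) | dist (y p) x.1 < r} :=
    fun p r =>
      (isOpen_lt ((continuous_const.dist continuous_fst : Continuous fun x : X × (ℕ → ℕ) =>
        dist (y p) x.1)) continuous_const).measurableSet
  have hmeas : MeasurableSet A := by
    have h1 : MeasurableSet {x : X × (ℕ → ℕ) | ∀ m : ℕ, ∃ n, m ≤ n ∧ x.2 n = 1} := by
      have he : {x : X × (ℕ → ℕ) | ∀ m : ℕ, ∃ n, m ≤ n ∧ x.2 n = 1} =
          ⋂ m : ℕ, ⋃ n : ℕ, {x : X × (ℕ → ℕ) | m ≤ n ∧ x.2 n = 1} := by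
        ext x; simp
      rw [he]
      refine MeasurableSet.iInter fun m => MeasurableSet.iUnion fun n => ?_
      by_cases h : m ≤ n
      · simp only [h, true_and]
        exact hS n
      · simp only [h, false_and, Set.setOf_false]
        exact MeasurableSet.empty
    have h2 : MeasurableSet {x : X × (ℕ → ℕ) |
        ∀ m : ℕ, ∃ F : Finset Pair, ∀ p : Pair, x.2 p.1.1 = 1 → x.2 p.1.2 = 1 →
          p ∉ F → dist (y p) x.1 < 1 / (m + 1)} := by
      have he : {x : X × (ℕ → ℕ) |
          ∀ m : ℕ, ∃ F : Finset Pair, ∀ p : Pair, x.2 p.1.1 = 1 → x.2 p.1.2 = 1 →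
            p ∉ F → dist (y p) x.1 < 1 / (m + 1)} =
          ⋂ m : ℕ, ⋃ F : Finset Pair, ⋂ p : Pair,
            {x : X × (ℕ → ℕ) | x.2 p.1.1 = 1 → x.2 p.1.2 = 1 →
              p ∉ F → dist (y p) x.1 < 1 / (m + 1)} := by
        ext x; simp
      rw [he]
      refine MeasurableSet.iInter fun m => MeasurableSet.iUnion fun F =>
        MeasurableSet.iInter fun p => ?_
      by_cases hpF : p ∈ F
      · have : {x : X × (ℕ → ℕ) | x.2 p.1.1 = 1 → x.2 p.1.2 = 1 →
            p ∉ F → dist (y p) x.1 < 1 / (m + 1)} = Set.univ := by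
          ext x; simp [hpF]
        rw [this]; exact MeasurableSet.univ
      have : {x : X × (ℕ → ℕ) | x.2 p.1.1 = 1 → x.2 p.1.2 = 1 →
          p ∉ F → dist (y p) x.1 < 1 / (m + 1)} =
          {x : X × (ℕ → ℕ) | x.2 p.1.1 = 1}ᶜ ∪ {x : X × (ℕ → ℕ) | x.2 p.1.2 = 1}ᶜ ∪
            {x : X × (ℕ → ℕ) | dist (y p) x.1 < 1 / (m + 1)} := by
        ext x
        simp only [Set.mem_setOf_eq, Set.mem_union, Set.mem_compl_iff, hpF,
          not_false_eq_true, forall_true_left]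
        tauto
      rw [this]
      exact ((hS _).compl.union (hS _).compl).union (hdist p _)
    exact (hA ▸ h1.inter h2 : MeasurableSet A)
  have him : {η : X | ∃ D : Set ℕ, D.Infinite ∧
      ∀ U ∈ 𝓝 η, {p ∈ pairsOf D | y p ∉ U}.Finite} = Prod.fst '' A := by
    ext η
    constructor
    · rintro ⟨D, hDinf, hP⟩
      refine ⟨(η, fun n => if n ∈ D then 1 else 0), ⟨fun m => ?_, fun m => ?_⟩, rfl⟩
      · obtain ⟨b, hbD, hmb⟩ := hDinf.exists_gt m
        exact ⟨b, hmb.le, if_pos hbD⟩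
      · have hE : {p ∈ pairsOf D | y p ∉ Metric.ball η (1 / (m + 1))}.Finite :=
          hP (Metric.ball η (1 / (m + 1))) (Metric.ball_mem_nhds _ (by positivity))
        refine ⟨hE.toFinset, fun p h1 h2 hF => ?_⟩
        have hp1 : p.1.1 ∈ D := by by_contra h; simp [h] at h1
        have hp2 : p.1.2 ∈ D := by by_contra h; simp [h] at h2
        by_contra hd
        exact hF (hE.mem_toFinset.2 ⟨⟨hp1, hp2⟩, fun hb => hd (Metric.mem_ball.1 hb)⟩)
    · rintro ⟨⟨η', χ⟩, ⟨hinf, hP⟩, rfl⟩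
      refine ⟨{n | χ n = 1}, ?_, fun U hU => ?_⟩
      · apply Set.infinite_of_forall_exists_gt
        intro a
        obtain ⟨n, hn, h1⟩ := hinf (a + 1)
        exact ⟨n, h1, by omega⟩
      · obtain ⟨ε, hε, hball⟩ := Metric.mem_nhds_iff.1 hU
        obtain ⟨m, hm⟩ := exists_nat_one_div_lt hε
        obtain ⟨F, hF⟩ := hP m
        refine F.finite_toSet.subset fun p hp => ?_
        by_contra hpF
        exact hp.2 (hball (Metric.mem_ball.2
          (lt_trans (hF p hp.1.1 hp.1.2 hpF) (by exact_mod_cast hm))))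
  rw [him]
  exact hmeas.analyticSet.image_of_continuous continuous_fst


/-! ### Main theorem -/


theorem analytic_eq_lambda_r_eq_lambda_ramsey
    [TopologicalSpace X] [PolishSpace X] [Uncountable X]
    (C : Set X) (hCne : C.Nonempty) (hC : MeasureTheory.AnalyticSet C) :
    (∃ y : Pair → X, C = {η | IsRLimitPoint y η} ∧
        C = {η | IsIdealLimitPoint ramseyIdeal y η}) ∧
      {A : Set X | A.Nonempty ∧ ∃ y : Pair → X, A = {η | IsRLimitPoint y η}} =
        {A : Set X | A.Nonempty ∧ MeasureTheory.AnalyticSet A} ∧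
      {A : Set X | A.Nonempty ∧
          ∃ y : Pair → X, A = {η | IsIdealLimitPoint ramseyIdeal y η}} =
        {A : Set X | A.Nonempty ∧ MeasureTheory.AnalyticSet A} := by
  have key : ∀ A : Set X, A.Nonempty → MeasureTheory.AnalyticSet A →
      ∃ y : Pair → X, A = {η | IsRLimitPoint y η} ∧
        A = {η | IsIdealLimitPoint ramseyIdeal y η} := by
    intro A hne hA
    rw [MeasureTheory.AnalyticSet] at hA
    rcases hA with h | ⟨f, hf, rfl⟩
    · exact absurd h hne.ne_empty
    refine ⟨yseq f, ?_, ?_⟩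
    · ext η
      constructor
      · rintro ⟨α, rfl⟩
        exact (yseq_mem hf α).1
      · intro h
        exact yseq_upper hf h
    · ext η
      constructor
      · rintro ⟨α, rfl⟩
        exact (yseq_mem hf α).2
      · intro h
        exact yseq_upper hf (idealLimit_to_rLimit _ _ h)
  refine ⟨key C hCne hC, ?_, ?_⟩
  · ext A
    constructor
    · rintro ⟨hne, y, rfl⟩
      exact ⟨hne, rLimit_analytic y⟩
    · rintro ⟨hne, hA⟩
      obtain ⟨y, h1, _⟩ := key A hne hA
      exact ⟨hne, y, h1⟩
  · ext A
    constructor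
    · rintro ⟨hne, y, rfl⟩
      refine ⟨hne, ?_⟩
      have heq : {η | IsIdealLimitPoint ramseyIdeal y η} = {η : X | ∃ D : Set ℕ, D.Infinite ∧
          ∀ U ∈ 𝓝 η, {p ∈ pairsOf D | y p ∉ U}.Finite} := by
        ext η
        exact idealLimit_iff y η
      rw [heq]
      exact ramseyLimit_aux_analytic y
    · rintro ⟨hne, hA⟩
      obtain ⟨y, _, h2⟩ := key A hne hA
      exact ⟨hne, y, h2⟩

end
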